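/- Let J be a strongly stable monomial ideal in A[x₀,…,xₙ] over a commutative noetherian ring A, F_J a J-marked set, and I = (F_J) the ideal it generates. Then for every degree s, the degree-s homogeneous component satisfies I_s = ⟨F_J^{(s)}⟩ + ⟨F̂_J^{(s)}⟩ = ⟨F_J^{(s)}⟩ + ⟨SF_J^{(s)}⟩ as A-modules. -/

import Mathlib

open MvPolynomial

noncomputable section

/-- Exponent vectors of monomials in the variables `x₀, …, xₙ`. -/
abbrev Mon (n : ℕ) : Type := Fin (n + 1) →₀ ℕ

namespace MarkedFamilies

variable {n : ℕ}

/-- The total degree of a monomial given by its exponent vector. -/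
def mdeg (α : Mon n) : ℕ := α.sum fun _ e => e

/-- A monomial ideal, identified with its (upward closed) set of monomials. -/
def IsMonomialIdeal (J : Set (Mon n)) : Prop := ∀ α ∈ J, ∀ δ : Mon n, α + δ ∈ J

/-- A strongly stable monomial ideal: a monomial ideal such that for every monomial
`x^α ∈ J`, every variable `x_j` dividing `x^α` and every `i > j`, `(x_i/x_j)·x^α ∈ J`. -/
def IsStronglyStable (J : Set (Mon n)) : Prop :=
  IsMonomialIdeal J ∧
    ∀ α ∈ J, ∀ j : Fin (n + 1), α j ≠ 0 → ∀ i : Fin (n + 1), j < i →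
      α - Finsupp.single j 1 + Finsupp.single i 1 ∈ J

/-- The minimal monomial generators `B_J` of a monomial ideal `J`. -/
def minGens (J : Set (Mon n)) : Set (Mon n) :=
  {α | α ∈ J ∧ ∀ j : Fin (n + 1), α j ≠ 0 → α - Finsupp.single j 1 ∉ J}

/-- `min x^γ ≥ max x^δ`: every variable dividing `x^γ` is at least every variable
dividing `x^δ` (vacuously true when either monomial is `1`). -/
def minGeMax (γ δ : Mon n) : Prop := ∀ i ∈ γ.support, ∀ j ∈ δ.support, j ≤ i

/-- Lexicographic order induced by `x₀ < ⋯ < xₙ`: `a <ₗₑₓ b` iff at the largest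
index where they differ, `a` has the smaller exponent. -/
def lexLt (a b : Mon n) : Prop :=
  ∃ i : Fin (n + 1), a i < b i ∧ ∀ j : Fin (n + 1), i < j → a j = b j

/-- A saturated strongly stable ideal: strongly stable and no minimal generator is
divisible by `x₀`. -/
def IsSaturatedSS (J : Set (Mon n)) : Prop :=
  IsStronglyStable J ∧ ∀ α ∈ minGens J, α 0 = 0

/-- The truncation `J_{≥ t}`: the (monomial) ideal generated by the monomials of `J`
of degree at least `t`. -/
def truncSet (J : Set (Mon n)) (t : ℕ) : Set (Mon n) := {α | α ∈ J ∧ t ≤ mdeg α}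

section Ring

variable (A : Type*) [CommRing A]

/-- `⟨N(J)⟩`: the `A`-span of the monomials not in `J`. -/
def nSpan (J : Set (Mon n)) : Submodule A (MvPolynomial (Fin (n + 1)) A) :=
  Submodule.span A {p | ∃ β : Mon n, β ∉ J ∧ p = monomial β (1 : A)}

/-- `⟨N(J)_s⟩`: the `A`-span of the monomials of degree `s` not in `J`. -/
def nSpanDeg (J : Set (Mon n)) (s : ℕ) : Submodule A (MvPolynomial (Fin (n + 1)) A) :=
  Submodule.span A {p | ∃ β : Mon n, β ∉ J ∧ mdeg β = s ∧ p = monomial β (1 : A)}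

/-- `I_s`: the degree-`s` homogeneous component of an ideal, as an `A`-submodule. -/
def idealDeg (I : Ideal (MvPolynomial (Fin (n + 1)) A)) (s : ℕ) :
    Submodule A (MvPolynomial (Fin (n + 1)) A) :=
  Submodule.restrictScalars A I ⊓ homogeneousSubmodule (Fin (n + 1)) A s

/-- `I_{≥ s}`: the ideal `⊕_{t ≥ s} I_t`, i.e. the ideal generated by the homogeneous
elements of `I` of degree at least `s`. -/
def idealGeq (I : Ideal (MvPolynomial (Fin (n + 1)) A)) (s : ℕ) :
    Ideal (MvPolynomial (Fin (n + 1)) A) :=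
  Ideal.span {f | f ∈ I ∧ ∃ t : ℕ, s ≤ t ∧ f.IsHomogeneous t}

/-- A homogeneous ideal of the polynomial ring. -/
def IsHomogIdeal (I : Ideal (MvPolynomial (Fin (n + 1)) A)) : Prop :=
  ∀ f ∈ I, ∀ s : ℕ, homogeneousComponent s f ∈ I

variable {A}

/-- A `J`-marked set: a family assigning to each minimal generator `x^α ∈ B_J` a
polynomial `f_α = x^α − Σ_{x^β ∈ N(J)_{|α|}} c_{αβ} x^β`. -/
def IsMarkedSet (J : Set (Mon n)) (F : Mon n → MvPolynomial (Fin (n + 1)) A) : Prop :=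
  ∀ α ∈ minGens J, (F α).coeff α = 1 ∧
    ∀ β ∈ (F α).support, β ≠ α → β ∉ J ∧ mdeg β = mdeg α

/-- The ideal generated by a marked set. -/
def markedIdeal (J : Set (Mon n)) (F : Mon n → MvPolynomial (Fin (n + 1)) A) :
    Ideal (MvPolynomial (Fin (n + 1)) A) :=
  Ideal.span (F '' minGens J)

/-- A `J`-marked basis: a `J`-marked set `F` with `A[x] = (F) ⊕ ⟨N(J)⟩` as `A`-modules. -/
def IsMarkedBasis (J : Set (Mon n)) (F : Mon n → MvPolynomial (Fin (n + 1)) A) : Prop :=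
  IsMarkedSet J F ∧
    IsCompl (Submodule.restrictScalars A (markedIdeal J F)) (nSpan A J)

/-- `F_J^{(s)} = { x^δ f_α : deg(x^δ f_α) = s, min x^α ≥ max x^δ }`. -/
def FSet (J : Set (Mon n)) (F : Mon n → MvPolynomial (Fin (n + 1)) A) (s : ℕ) :
    Set (MvPolynomial (Fin (n + 1)) A) :=
  {p | ∃ α δ : Mon n, α ∈ minGens J ∧ mdeg α + mdeg δ = s ∧ minGeMax α δ ∧
        p = monomial δ (1 : A) * F α}

/-- `F̂_J^{(s)} = { x^δ f_α : deg(x^δ f_α) = s, min x^α < max x^δ }`. -/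
def FHatSet (J : Set (Mon n)) (F : Mon n → MvPolynomial (Fin (n + 1)) A) (s : ℕ) :
    Set (MvPolynomial (Fin (n + 1)) A) :=
  {p | ∃ α δ : Mon n, α ∈ minGens J ∧ mdeg α + mdeg δ = s ∧ ¬ minGeMax α δ ∧
        p = monomial δ (1 : A) * F α}

/-- `SF_J^{(s)} = { x^δ f_β − x^γ f_α : x^δ f_β ∈ F̂_J^{(s)}, x^γ f_α ∈ F_J^{(s)},
x^δ x^β = x^γ x^α }`. -/
def SFSet (J : Set (Mon n)) (F : Mon n → MvPolynomial (Fin (n + 1)) A) (s : ℕ) :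
    Set (MvPolynomial (Fin (n + 1)) A) :=
  {p | ∃ α γ β δ : Mon n, α ∈ minGens J ∧ β ∈ minGens J ∧
      mdeg β + mdeg δ = s ∧ ¬ minGeMax β δ ∧
      mdeg α + mdeg γ = s ∧ minGeMax α γ ∧
      δ + β = γ + α ∧ p = monomial δ (1 : A) * F β - monomial γ (1 : A) * F α}

/-- A `(J_s)`-marked set: one marked polynomial `f̃_γ = x^γ − Σ_{x^δ ∈ N(J)_s} d_{γδ} x^δ`
for each monomial `x^γ` of degree `s` in `J`. -/
def IsTruncMarkedSet (J : Set (Mon n)) (s : ℕ)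
    (f : Mon n → MvPolynomial (Fin (n + 1)) A) : Prop :=
  ∀ γ : Mon n, γ ∈ J → mdeg γ = s →
    (f γ).coeff γ = 1 ∧ ∀ β ∈ (f γ).support, β ≠ γ → β ∉ J ∧ mdeg β = s

end Ring

/-- Index set for the generic coefficients `C_{αβ}` (`x^α ∈ B_J`, `x^β ∈ N(J)_{|α|}`). -/
abbrev CIdx (J : Set (Mon n)) : Type :=
  {p : Mon n × Mon n // p.1 ∈ minGens J ∧ p.2 ∉ J ∧ mdeg p.2 = mdeg p.1}

/-- The coefficient ring `ℤ[C]`. -/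
abbrev ZC (J : Set (Mon n)) : Type := MvPolynomial (CIdx J) ℤ

/-- The generic `J`-marked set `𝓕_J = { x^α − Σ_{x^β ∈ N(J)_{|α|}} C_{αβ} x^β }`
in `ℤ[C][x]`, characterized through its coefficients. -/
def IsGenericMarkedSet (J : Set (Mon n))
    (𝓕 : Mon n → MvPolynomial (Fin (n + 1)) (ZC J)) : Prop :=
  ∀ α : Mon n, ∀ hα : α ∈ minGens J,
    (𝓕 α).coeff α = 1 ∧
    (∀ γ : Mon n, ∀ hγ : γ ∉ J ∧ mdeg γ = mdeg α,
      (𝓕 α).coeff γ = - MvPolynomial.X ⟨(α, γ), hα, hγ.1, hγ.2⟩) ∧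
    (∀ γ : Mon n, γ ≠ α → ¬(γ ∉ J ∧ mdeg γ = mdeg α) → (𝓕 α).coeff γ = 0)

/-- The ideal `𝔦_J ⊆ ℤ[C]` generated by the `x`-coefficients of all polynomials
in `(𝓕_J) ∩ ⟨N(J)⟩`. -/
def markedCoeffIdeal (J : Set (Mon n))
    (𝓕 : Mon n → MvPolynomial (Fin (n + 1)) (ZC J)) : Ideal (ZC J) :=
  Ideal.span {c : ZC J | ∃ p : MvPolynomial (Fin (n + 1)) (ZC J),
    p ∈ markedIdeal J 𝓕 ∧ p ∈ nSpan (ZC J) J ∧ ∃ γ : Mon n, p.coeff γ = c}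

/-- The evaluation homomorphism `φ_{F_J} : ℤ[C] → A`, `C_{αβ} ↦ c_{αβ}`, associated to a
`J`-marked set `F` with `f_α = x^α − Σ c_{αβ} x^β` (so `c_{αβ} = −(F α).coeff β`). -/
noncomputable def evalHom (J : Set (Mon n)) {A : Type*} [CommRing A]
    (F : Mon n → MvPolynomial (Fin (n + 1)) A) : ZC J →+* A :=
  MvPolynomial.eval₂Hom (Int.castRingHom A) fun p => -((F p.val.1).coeff p.val.2)

/-- `x^γ` is the `σ`-leading monomial of `g` (with nonzero leading coefficient). -/
def IsLeadingMon {A : Type*} [CommRing A] (σlt : Mon n → Mon n → Prop)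
    (g : MvPolynomial (Fin (n + 1)) A) (γ : Mon n) : Prop :=
  g.coeff γ ≠ 0 ∧ ∀ δ ∈ g.support, δ ≠ γ → σlt δ γ

/-- `LC(I, x^γ)`: the set of leading coefficients at `x^γ` of elements of `I`,
together with `0`. -/
def LCset {A : Type*} [CommRing A] (σlt : Mon n → Mon n → Prop)
    (I : Ideal (MvPolynomial (Fin (n + 1)) A)) (γ : Mon n) : Set A :=
  {a | ∃ g ∈ I, IsLeadingMon σlt g γ ∧ g.coeff γ = a} ∪ {0}

/-- A monic ideal with respect to the term ordering `σ`. -/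
def IsMonicIdeal {A : Type*} [CommRing A] (σlt : Mon n → Mon n → Prop)
    (I : Ideal (MvPolynomial (Fin (n + 1)) A)) : Prop :=
  ∀ γ : Mon n, LCset σlt I γ = {0} ∨ LCset σlt I γ = Set.univ

/-- The set of `σ`-leading monomials of elements of `I` (i.e. `in_σ(I)`,
identified with its set of monomials). -/
def leadingMons {A : Type*} [CommRing A] (σlt : Mon n → Mon n → Prop)
    (I : Ideal (MvPolynomial (Fin (n + 1)) A)) : Set (Mon n) :=
  {γ | ∃ g ∈ I, IsLeadingMon σlt g γ}

end MarkedFamilies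
end

open MvPolynomial
namespace MarkedAux
open MarkedFamilies

variable {n : ℕ}

lemma mdeg_eq_degree (α : Mon n) : mdeg α = α.degree := rfl

lemma mdeg_add (a b : Mon n) : mdeg (a + b) = mdeg a + mdeg b := by
  unfold mdeg
  exact Finsupp.sum_add_index' (fun _ => rfl) (fun _ _ _ => rfl)

lemma sub_add_single {ε : Mon n} {m : Fin (n + 1)} (h : ε m ≠ 0) :
    ε - Finsupp.single m 1 + Finsupp.single m 1 = ε := by
  ext i
  rcases eq_or_ne m i with rfl | hne
  · simp only [Finsupp.add_apply, Finsupp.tsub_apply, Finsupp.single_eq_same]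
    omega
  · simp [Finsupp.single_apply, hne]

lemma mdeg_single (m : Fin (n + 1)) : mdeg (Finsupp.single m 1 : Mon n) = 1 := by
  unfold mdeg
  simp [Finsupp.sum_single_index]

/-- Eliahou–Kervaire decomposition for strongly stable ideals. -/
lemma decomp {J : Set (Mon n)} (hJ : IsStronglyStable J) (d : ℕ) :
    ∀ ε : Mon n, mdeg ε = d → ε ∈ J →
      ∃ α γ : Mon n, α ∈ minGens J ∧ minGeMax α γ ∧ ε = γ + α := by
  induction d using Nat.strong_induction_on with
  | _ d ih =>
    intro ε hd hε
    by_cases hmin : ε ∈ minGens J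
    · exact ⟨ε, 0, hmin, by intro i _ j hj; simp at hj, (zero_add ε).symm⟩
    · have : ∃ j : Fin (n + 1), ε j ≠ 0 ∧ ε - Finsupp.single j 1 ∈ J := by
        by_contra hc
        push_neg at hc
        exact hmin ⟨hε, fun j hj => hc j hj⟩
      obtain ⟨j, hj, hjJ⟩ := this
      have hjs : j ∈ ε.support := Finsupp.mem_support_iff.mpr hj
      obtain ⟨m, hms, hmle⟩ : ∃ m ∈ ε.support, ∀ k ∈ ε.support, m ≤ k :=
        ⟨ε.support.min' ⟨j, hjs⟩, Finset.min'_mem _ _, fun k hk => Finset.min'_le _ k hk⟩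
      have hm : ε m ≠ 0 := Finsupp.mem_support_iff.mp hms
      have hJm : ε - Finsupp.single m 1 ∈ J := by
        rcases eq_or_ne m j with rfl | hne
        · exact hjJ
        · have hmj : m < j := lt_of_le_of_ne (hmle j hjs) hne
          have h1 : (ε - Finsupp.single j 1 : Mon n) m ≠ 0 := by
            rw [Finsupp.tsub_apply, Finsupp.single_apply, if_neg hne.symm]
            omega
          have h2 := hJ.2 _ hjJ m h1 j hmj
          have h3 : ε - Finsupp.single j 1 - Finsupp.single m 1 + Finsupp.single j 1
              = ε - Finsupp.single m 1 := by
            ext i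
            rw [Finsupp.add_apply, Finsupp.tsub_apply, Finsupp.tsub_apply,
              Finsupp.tsub_apply, Finsupp.single_apply, Finsupp.single_apply]
            rcases eq_or_ne j i with rfl | hij
            · rw [if_pos rfl, if_neg hne]
              omega
            · rw [if_neg hij]
              omega
          rwa [h3] at h2
      have hsum : ε - Finsupp.single m 1 + Finsupp.single m 1 = ε := sub_add_single hm
      have hlt : mdeg (ε - Finsupp.single m 1) < d := by
        have := mdeg_add (ε - Finsupp.single m 1) (Finsupp.single m 1)
        rw [hsum, hd, mdeg_single] at this
        omega
      obtain ⟨α, γ', hα, hge, heq⟩ := ih _ hlt (ε - Finsupp.single m 1) rfl hJm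
      refine ⟨α, γ' + Finsupp.single m 1, hα, ?_, ?_⟩
      · intro i hi k hk
        have hk' := Finsupp.support_add hk
        rcases Finset.mem_union.mp hk' with h | h
        · exact hge i hi k h
        · have hkm : k = m := by
            have := Finsupp.support_single_subset h
            simpa using this
          subst hkm
          have hai : α i ≠ 0 := Finsupp.mem_support_iff.mp hi
          have h1 : (ε - Finsupp.single k 1 : Mon n) i = (γ' + α : Mon n) i := by rw [heq]
          rw [Finsupp.add_apply, Finsupp.tsub_apply] at h1
          have hεi : ε i ≠ 0 := by omega
          exact hmle i (Finsupp.mem_support_iff.mpr hεi)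
      · rw [← hsum, heq, add_right_comm]


section Ring

variable {A : Type*} [CommRing A] {J : Set (Mon n)}
variable {F : Mon n → MvPolynomial (Fin (n + 1)) A}

lemma gen_homog (hF : IsMarkedSet J F) {α : Mon n} (hα : α ∈ minGens J) :
    (F α).IsHomogeneous (mdeg α) := by
  intro d hd
  change (Finsupp.weight (fun _ => 1)) d = mdeg α
  rw [← Finsupp.degree_eq_weight_one, ← mdeg_eq_degree]
  rcases eq_or_ne d α with rfl | hne
  · rfl
  · exact ((hF α hα).2 d (MvPolynomial.mem_support_iff.mpr hd) hne).2

lemma big_homog (hF : IsMarkedSet J F) {α δ : Mon n} (hα : α ∈ minGens J) :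
    (monomial δ (1 : A) * F α).IsHomogeneous (mdeg δ + mdeg α) :=
  (isHomogeneous_monomial (1 : A) (mdeg_eq_degree δ).symm).mul (gen_homog hF hα)

lemma X_mul_mem_span {S : Set (MvPolynomial (Fin (n + 1)) A)}
    (hS : ∀ i : Fin (n + 1), ∀ q ∈ S, X i * q ∈ Submodule.span A S)
    (i : Fin (n + 1)) {f : MvPolynomial (Fin (n + 1)) A}
    (hf : f ∈ Submodule.span A S) : X i * f ∈ Submodule.span A S := by
  refine Submodule.span_induction (fun q hq => hS i q hq) ?_ ?_ ?_ hf
  · simp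
  · intro x y _ _ hx hy
    rw [mul_add]
    exact add_mem hx hy
  · intro a x _ hx
    rw [mul_smul_comm]
    exact Submodule.smul_mem _ a hx

lemma mul_mem_span {S : Set (MvPolynomial (Fin (n + 1)) A)}
    (hS : ∀ i : Fin (n + 1), ∀ q ∈ S, X i * q ∈ Submodule.span A S)
    (p : MvPolynomial (Fin (n + 1)) A) {f : MvPolynomial (Fin (n + 1)) A}
    (hf : f ∈ Submodule.span A S) : p * f ∈ Submodule.span A S := by
  induction p using MvPolynomial.induction_on with
  | C a =>
    rw [← smul_eq_C_mul]
    exact Submodule.smul_mem _ a hf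
  | add p q hp hq =>
    rw [add_mul]
    exact add_mem hp hq
  | mul_X p i hp =>
    rw [mul_comm p (X i), mul_assoc]
    exact X_mul_mem_span hS i hp

/-- The big spanning set: all monomial multiples of the marked polynomials. -/
def Big (J : Set (Mon n)) (F : Mon n → MvPolynomial (Fin (n + 1)) A) :
    Set (MvPolynomial (Fin (n + 1)) A) :=
  {p | ∃ α δ : Mon n, α ∈ minGens J ∧ p = monomial δ (1 : A) * F α}

lemma big_X_closed (i : Fin (n + 1)) :
    ∀ q ∈ Big J F, X i * q ∈ Submodule.span A (Big J F) := by
  rintro q ⟨α, δ, hα, rfl⟩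
  refine Submodule.subset_span ⟨α, Finsupp.single i 1 + δ, hα, ?_⟩
  rw [← mul_assoc, X, monomial_mul, one_mul]

lemma marked_subset_big {f : MvPolynomial (Fin (n + 1)) A}
    (hf : f ∈ markedIdeal J F) : f ∈ Submodule.span A (Big J F) := by
  refine Submodule.span_induction ?_ ?_ ?_ ?_ hf
  · rintro q ⟨α, hα, rfl⟩
    refine Submodule.subset_span ⟨α, 0, hα, ?_⟩
    rw [monomial_zero', C_1, one_mul]
  · exact Submodule.zero_mem _
  · intro x y _ _ hx hy
    exact add_mem hx hy
  · intro p x _ hx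
    rw [smul_eq_mul]
    exact mul_mem_span (fun i => big_X_closed i) p hx

end Ring
end MarkedAux


open MarkedFamilies in
/-- `I_s = ⟨F_J^{(s)}⟩ + ⟨F̂_J^{(s)}⟩ = ⟨F_J^{(s)}⟩ + ⟨SF_J^{(s)}⟩`. -/
theorem stmt_3 {n : ℕ} {A : Type*} [CommRing A] [IsNoetherianRing A]
    (J : Set (Mon n)) (hJ : IsStronglyStable J)
    (F : Mon n → MvPolynomial (Fin (n + 1)) A) (hF : IsMarkedSet J F) (s : ℕ) :
    idealDeg A (markedIdeal J F) s
        = Submodule.span A (FSet J F s) ⊔ Submodule.span A (FHatSet J F s) ∧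
    idealDeg A (markedIdeal J F) s
        = Submodule.span A (FSet J F s) ⊔ Submodule.span A (SFSet J F s) := by
  classical
  have h1 : idealDeg A (markedIdeal J F) s
      = Submodule.span A (FSet J F s) ⊔ Submodule.span A (FHatSet J F s) := by
    rw [← Submodule.span_union]
    apply le_antisymm
    · intro f hf
      simp only [idealDeg, Submodule.mem_inf, Submodule.restrictScalars_mem] at hf
      obtain ⟨hfI, hfs⟩ := hf
      have hfb : f ∈ Submodule.span A (MarkedAux.Big J F) := MarkedAux.marked_subset_big hfI
      have key : homogeneousComponent s f
          ∈ Submodule.span A (FSet J F s ∪ FHatSet J F s) := by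
        refine Submodule.span_induction ?_ ?_ ?_ ?_ hfb
        · rintro q ⟨α, δ, hα, rfl⟩
          have hq := MarkedAux.big_homog hF hα (δ := δ)
          rw [homogeneousComponent_of_mem (m := s) ((mem_homogeneousSubmodule _ _).mpr hq)]
          split_ifs with hs
          · by_cases hgm : minGeMax α δ
            · exact Submodule.subset_span (Or.inl ⟨α, δ, hα, by omega, hgm, rfl⟩)
            · exact Submodule.subset_span (Or.inr ⟨α, δ, hα, by omega, hgm, rfl⟩)
          · exact Submodule.zero_mem _
        · rw [map_zero]; exact Submodule.zero_mem _
        · intro x y _ _ hx hy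
          rw [map_add]; exact add_mem hx hy
        · intro a x _ hx
          rw [map_smul]; exact Submodule.smul_mem _ a hx
      rwa [homogeneousComponent_of_mem hfs, if_pos rfl] at key
    · rw [Submodule.span_le]
      rintro q (⟨α, δ, hα, hdeg, _, rfl⟩ | ⟨α, δ, hα, hdeg, _, rfl⟩) <;>
      · refine Submodule.mem_inf.mpr ⟨?_, ?_⟩
        · exact Ideal.mul_mem_left _ _ (Ideal.subset_span ⟨α, hα, rfl⟩)
        · refine (mem_homogeneousSubmodule _ _).mpr ?_
          have hq := MarkedAux.big_homog hF hα (δ := δ)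
          rwa [show mdeg δ + mdeg α = s by omega] at hq
  have hle1 : Submodule.span A (SFSet J F s)
      ≤ Submodule.span A (FSet J F s) ⊔ Submodule.span A (FHatSet J F s) := by
    rw [Submodule.span_le]
    rintro q ⟨α, γ, β, δ, hα, hβ, hdβ, hnm, hdα, hm, hmon, rfl⟩
    exact sub_mem
      (Submodule.mem_sup_right (Submodule.subset_span ⟨β, δ, hβ, hdβ, hnm, rfl⟩))
      (Submodule.mem_sup_left (Submodule.subset_span ⟨α, γ, hα, hdα, hm, rfl⟩))
  have hle2 : Submodule.span A (FHatSet J F s)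
      ≤ Submodule.span A (FSet J F s) ⊔ Submodule.span A (SFSet J F s) := by
    rw [Submodule.span_le]
    rintro q ⟨β, δ, hβ, hdeg, hnm, rfl⟩
    have hmem : δ + β ∈ J := by rw [add_comm]; exact hJ.1 β hβ.1 δ
    obtain ⟨α, γ, hα, hge, heq⟩ := MarkedAux.decomp hJ (mdeg (δ + β)) (δ + β) rfl hmem
    have hdγ : mdeg α + mdeg γ = s := by
      have hh1 := MarkedAux.mdeg_add δ β
      have hh2 := MarkedAux.mdeg_add γ α
      rw [← heq] at hh2
      omega
    have hsplit : monomial δ (1 : A) * F β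
        = (monomial δ (1 : A) * F β - monomial γ (1 : A) * F α)
          + monomial γ (1 : A) * F α := by ring
    rw [hsplit]
    exact add_mem
      (Submodule.mem_sup_right (Submodule.subset_span
        ⟨α, γ, β, δ, hα, hβ, hdeg, hnm, hdγ, hge, heq, rfl⟩))
      (Submodule.mem_sup_left (Submodule.subset_span ⟨α, γ, hα, hdγ, hge, rfl⟩))
  have h2 : Submodule.span A (FSet J F s) ⊔ Submodule.span A (FHatSet J F s)
      = Submodule.span A (FSet J F s) ⊔ Submodule.span A (SFSet J F s) :=
    le_antisymm (sup_le le_sup_left hle2) (sup_le le_sup_left hle1)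
  exact ⟨h1, h1.trans h2⟩
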